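/- Let Γ₀ ⊆ Γ be two full-rank lattices in E. If their Dirichlet domains coincide, i.e. {H ∈ E : ‖H‖ < ‖H + γ‖ for every nonzero γ ∈ Γ} = {H ∈ E : ‖H‖ < ‖H + γ‖ for every nonzero γ ∈ Γ₀}, then Γ = Γ₀. -/

import Mathlib

/-- If two nested full-rank lattices `Γ₀ ⊆ Γ` in `E` have the same Dirichlet
domain, then they are equal. -/
theorem lattice_eq_of_dirichlet_eq {E : Type*}
    [NormedAddCommGroup E] [InnerProductSpace ℝ E] [FiniteDimensional ℝ E]
    (Γ₀ Γ : AddSubgroup E) [DiscreteTopology Γ₀] [DiscreteTopology Γ]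
    (hspan₀ : Submodule.span ℝ (Γ₀ : Set E) = ⊤)
    (hspan : Submodule.span ℝ (Γ : Set E) = ⊤)
    (hle : Γ₀ ≤ Γ)
    (hD : {H : E | ∀ γ ∈ Γ, γ ≠ 0 → ‖H‖ < ‖H + γ‖} =
          {H : E | ∀ γ ∈ Γ₀, γ ≠ 0 → ‖H‖ < ‖H + γ‖}) :
    Γ = Γ₀ := by
  by_contra hne
  obtain ⟨γ, hγΓ, hγ₀⟩ : ∃ γ ∈ Γ, γ ∉ Γ₀ := by
    by_contra h; push_neg at h
    exact hne (le_antisymm (fun x hx => h x hx) hle)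
  have hclosed : IsClosed (Γ₀ : Set E) := AddSubgroup.isClosed_of_discrete
  -- the coset γ + Γ₀
  set S : Set E := (γ + ·) '' (Γ₀ : Set E) with hS
  have hSclosed : IsClosed S := (Homeomorph.addLeft γ).isClosedMap _ hclosed
  have hγS : γ ∈ S := ⟨0, Γ₀.zero_mem, by simp⟩
  -- minimizer of the norm on the coset
  have hT : IsCompact (S ∩ Metric.closedBall 0 ‖γ‖) :=
    (isCompact_closedBall 0 ‖γ‖).inter_left hSclosed
  obtain ⟨g, ⟨hgS, hgB⟩, hgmin⟩ :=
    hT.exists_isMinOn ⟨γ, hγS, by simp⟩ (continuous_norm.continuousOn)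
  have hmin : ∀ x ∈ S, ‖g‖ ≤ ‖x‖ := by
    intro x hx
    rcases le_or_gt ‖x‖ ‖γ‖ with h | h
    · exact hgmin ⟨hx, by simpa using h⟩
    · exact le_trans (hgmin ⟨hγS, by simp⟩) h.le
  obtain ⟨δ₀, hδ₀, hgeq⟩ := hgS
  have hgΓ : g ∈ Γ := hgeq ▸ Γ.add_mem hγΓ (hle hδ₀)
  have hg₀ : g ∉ Γ₀ := by
    intro h
    have := Γ₀.sub_mem h hδ₀
    rw [← hgeq] at this
    exact hγ₀ (by simpa using this)
  have hgne : g ≠ 0 := fun h => hg₀ (h ▸ Γ₀.zero_mem)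
  -- key: 2⟪g, δ⟫ ≤ ‖δ‖² for every δ ∈ Γ₀ (minimality of ‖g‖ in its coset)
  have key : ∀ δ ∈ Γ₀, 2 * (inner ℝ g δ : ℝ) ≤ ‖δ‖ ^ 2 := by
    intro δ hδ
    have h1 : ‖g‖ ≤ ‖g + -δ‖ := by
      refine hmin _ ⟨δ₀ + -δ, Γ₀.add_mem hδ₀ (Γ₀.neg_mem hδ), ?_⟩
      simp only [← hgeq]; abel
    have h2 : ‖g‖ ^ 2 ≤ ‖g + -δ‖ ^ 2 := by
      exact pow_le_pow_left₀ (norm_nonneg _) h1 2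
    rw [@norm_add_sq_real, inner_neg_right, norm_neg] at h2
    linarith
  -- the point H = -(3/4)g lies in the Dirichlet domain of Γ₀ ...
  set H : E := -((3/4 : ℝ) • g) with hH
  have hHmem : H ∈ {H : E | ∀ γ ∈ Γ₀, γ ≠ 0 → ‖H‖ < ‖H + γ‖} := by
    intro δ hδ hδne
    have hsq : ‖H‖ ^ 2 < ‖H + δ‖ ^ 2 := by
      rw [@norm_add_sq_real]
      have hinner : (inner ℝ H δ : ℝ) = -(3/4) * (inner ℝ g δ : ℝ) := by
        rw [hH, inner_neg_left, real_inner_smul_left]; ring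
      have hδpos : (0:ℝ) < ‖δ‖ ^ 2 := pow_pos (norm_pos_iff.mpr hδne) 2
      have := key δ hδ
      nlinarith
    exact lt_of_pow_lt_pow_left₀ 2 (norm_nonneg _) hsq
  -- ... but not in the Dirichlet domain of Γ
  rw [← hD] at hHmem
  have hlt := hHmem g hgΓ hgne
  have h4 : H + g = (1/4 : ℝ) • g := by rw [hH]; module
  rw [h4, norm_smul, hH, norm_neg, norm_smul] at hlt
  simp only [Real.norm_eq_abs] at hlt
  have hgpos : 0 < ‖g‖ := norm_pos_iff.mpr hgne
  rw [abs_of_pos (by norm_num : (0:ℝ) < 3/4), abs_of_pos (by norm_num : (0:ℝ) < 1/4)] at hlt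
  nlinarith
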